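/- For the unrestricted FDMA sum-rate problem, the proportional-share allocation w_k = w_tot · p_k / (∑_{k'} p_{k'}) is the unique maximizer of ∑_k w_k·log(1 + p_k/(N₀·w_k)) over all nonnegative (w_k) with ∑_k w_k ≤ w_tot, and the resulting maximum value equals w_tot·log(1 + (∑_k p_k)/(N₀·w_tot)). -/

import Mathlib

open Real Finset

/-- Tangent-line bound for one term of the FDMA objective. -/
private lemma fdma_term_le {p N₀ a wk : ℝ} (hp : 0 < p) (hN : 0 < N₀) (ha : 1 < a)
    (hwk : 0 ≤ wk) :
    wk * Real.log (1 + p / (N₀ * wk)) ≤ wk * Real.log a + (wk + p / N₀ - a * wk) / a := by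
  have ha0 : 0 < a := lt_trans one_pos ha
  rcases eq_or_lt_of_le hwk with h0 | h0
  · rw [← h0]
    simp
    positivity
  · set x := 1 + p / (N₀ * wk) with hxdef
    have hx : 0 < x := by positivity
    have hlog : Real.log x - Real.log a ≤ x / a - 1 := by
      have h := Real.log_le_sub_one_of_pos (show 0 < x / a by positivity)
      rwa [Real.log_div hx.ne' ha0.ne'] at h
    have hxa : wk * x = wk + p / N₀ := by
      rw [hxdef]; field_simp
    have h1 : wk * Real.log x ≤ wk * (Real.log a + (x / a - 1)) :=
      mul_le_mul_of_nonneg_left (by linarith) hwk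
    have h2 : wk * (Real.log a + (x / a - 1)) = wk * Real.log a + (wk + p / N₀ - a * wk) / a := by
      rw [← hxa]; field_simp
    linarith

/-- Strict version when the SNR ratio differs from the target. -/
private lemma fdma_term_lt {p N₀ a wk : ℝ} (hp : 0 < p) (hN : 0 < N₀) (ha : 1 < a)
    (hwk : 0 ≤ wk) (hne : 1 + p / (N₀ * wk) ≠ a) :
    wk * Real.log (1 + p / (N₀ * wk)) < wk * Real.log a + (wk + p / N₀ - a * wk) / a := by
  have ha0 : 0 < a := lt_trans one_pos ha
  rcases eq_or_lt_of_le hwk with h0 | h0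
  · rw [← h0]
    simp
    positivity
  · set x := 1 + p / (N₀ * wk) with hxdef
    have hx : 0 < x := by positivity
    have hlog : Real.log x - Real.log a < x / a - 1 := by
      have h := Real.log_lt_sub_one_of_pos (show 0 < x / a by positivity)
        (by
          intro h1
          apply hne
          have : x = a := by
            field_simp at h1
            linarith
          exact this)
      rwa [Real.log_div hx.ne' ha0.ne'] at h
    have hxa : wk * x = wk + p / N₀ := by
      rw [hxdef]; field_simp
    have h1 : wk * Real.log x < wk * (Real.log a + (x / a - 1)) :=
      (mul_lt_mul_iff_right₀ h0).2 (by linarith)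
    have h2 : wk * (Real.log a + (x / a - 1)) = wk * Real.log a + (wk + p / N₀ - a * wk) / a := by
      rw [← hxa]; field_simp
    linarith

/-- Strict monotonicity of `W ↦ W log(1 + c/W)` on `[0,∞)`. -/
private lemma fdma_M_lt {c W1 W2 : ℝ} (hc : 0 < c) (h0 : 0 ≤ W1) (h12 : W1 < W2) :
    W1 * Real.log (1 + c / W1) < W2 * Real.log (1 + c / W2) := by
  have hW2 : 0 < W2 := lt_of_le_of_lt h0 h12
  have hR : 0 < W2 * Real.log (1 + c / W2) := by
    apply mul_pos hW2
    apply Real.log_pos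
    have : 0 < c / W2 := by positivity
    linarith
  rcases eq_or_lt_of_le h0 with h | hW1
  · rw [← h]; simpa using hR
  · set x1 := c / W1 with hx1def
    set x2 := c / W2 with hx2def
    have hx1 : 0 < x1 := by positivity
    have hx2 : 0 < x2 := by positivity
    have hx21 : x2 < x1 := by
      rw [hx1def, hx2def]
      exact div_lt_div_of_pos_left hc hW1 h12
    -- key : x2 * log (1+x1) < x1 * log (1+x2)
    have key : x2 * Real.log (1 + x1) < x1 * Real.log (1 + x2) := by
      have h1x1 : (0:ℝ) < 1 + x1 := by linarith
      have h1x2 : (0:ℝ) < 1 + x2 := by linarith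
      have hA : Real.log (1 + x1) - Real.log (1 + x2) ≤ (x1 - x2) / (1 + x2) := by
        have h := Real.log_le_sub_one_of_pos (show 0 < (1 + x1) / (1 + x2) by positivity)
        rw [Real.log_div h1x1.ne' h1x2.ne'] at h
        have : (1 + x1) / (1 + x2) - 1 = (x1 - x2) / (1 + x2) := by
          field_simp; ring
        linarith [this ▸ h]
      have hB : x2 / (1 + x2) < Real.log (1 + x2) := by
        have h := Real.log_lt_sub_one_of_pos (show 0 < 1 / (1 + x2) by positivity)
          (by
            intro h1
            rw [div_eq_one_iff_eq h1x2.ne'] at h1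
            linarith)
        rw [Real.log_div one_ne_zero h1x2.ne', Real.log_one] at h
        have : 1 / (1 + x2) - 1 = -(x2 / (1 + x2)) := by field_simp; ring
        linarith [this ▸ h]
      -- x2 * log(1+x1) ≤ x2*log(1+x2) + x2*(x1-x2)/(1+x2) < x2*log(1+x2) + (x1-x2)*log(1+x2)
      have hstep : x2 * ((x1 - x2) / (1 + x2)) < (x1 - x2) * Real.log (1 + x2) := by
        have hx12 : 0 < x1 - x2 := by linarith
        have := (mul_lt_mul_iff_right₀ hx12).2 hB
        calc x2 * ((x1 - x2) / (1 + x2)) = (x1 - x2) * (x2 / (1 + x2)) := by ring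
          _ < (x1 - x2) * Real.log (1 + x2) := this
      nlinarith [mul_le_mul_of_nonneg_left hA hx2.le]
    -- convert : W1 = c/x1, W2 = c/x2
    have hW1x : W1 * x1 = c := by rw [hx1def]; field_simp
    have hW2x : W2 * x2 = c := by rw [hx2def]; field_simp
    -- W1 * log(1+x1) < W2 * log(1+x2)
    -- multiply key by c/(x1*x2) : (c/x1) log(1+x1) < (c/x2) log(1+x2)
    have hgoal : W1 * Real.log (1 + x1) < W2 * Real.log (1 + x2) := by
      have hpos : 0 < x1 * x2 := mul_pos hx1 hx2
      rw [show W1 = c / x1 by (field_simp [← hW1x]; exact hW1x), show W2 = c / x2 by (field_simp [← hW2x]; exact hW2x)]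
      rw [div_mul_eq_mul_div, div_mul_eq_mul_div, div_lt_div_iff₀ hx1 hx2]
      nlinarith [key, hc]
    exact hgoal

/-- Sum bound: the objective is at most `W log(1 + P/(N₀ W))`. -/
private lemma fdma_G_le {K : ℕ} (hK : 0 < K) (p : Fin K → ℝ) (hp : ∀ k, 0 < p k) {N₀ : ℝ}
    (hN : 0 < N₀) (w : Fin K → ℝ) (hw : ∀ k, 0 ≤ w k) {W : ℝ} (hW : 0 < W)
    (hsum : ∑ k, w k = W) :
    ∑ k, w k * Real.log (1 + p k / (N₀ * w k)) ≤
      W * Real.log (1 + (∑ k, p k) / (N₀ * W)) := by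
  haveI : Nonempty (Fin K) := ⟨⟨0, hK⟩⟩
  set P := ∑ k, p k with hPdef
  have hP : 0 < P := Finset.sum_pos (fun k _ => hp k) Finset.univ_nonempty
  set a := 1 + P / (N₀ * W) with hadef
  have ha : 1 < a := by
    have : 0 < P / (N₀ * W) := by positivity
    simp only [hadef]; linarith
  calc ∑ k, w k * Real.log (1 + p k / (N₀ * w k))
      ≤ ∑ k, (w k * Real.log a + (w k + p k / N₀ - a * w k) / a) :=
        Finset.sum_le_sum (fun k _ => fdma_term_le (hp k) hN ha (hw k))
    _ = W * Real.log a := by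
        rw [Finset.sum_add_distrib, ← Finset.sum_mul, hsum, ← Finset.sum_div]
        have h1 : ∑ k, (w k + p k / N₀ - a * w k) = W + P / N₀ - a * W := by
          rw [Finset.sum_sub_distrib, Finset.sum_add_distrib, hsum, ← Finset.sum_div,
            ← Finset.mul_sum, hsum]
        have h2 : a * W = W + P / N₀ := by
          rw [hadef]; field_simp
        rw [h1, h2]
        simp

/-- Strict sum bound when the allocation is not proportional. -/
private lemma fdma_G_lt {K : ℕ} (p : Fin K → ℝ) (hp : ∀ k, 0 < p k) {N₀ : ℝ}
    (hN : 0 < N₀) (w : Fin K → ℝ) (hw : ∀ k, 0 ≤ w k) {W : ℝ} (hW : 0 < W)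
    (hsum : ∑ k, w k = W) (k0 : Fin K) (hk0 : w k0 ≠ W * p k0 / (∑ k', p k')) :
    ∑ k, w k * Real.log (1 + p k / (N₀ * w k)) <
      W * Real.log (1 + (∑ k, p k) / (N₀ * W)) := by
  haveI : Nonempty (Fin K) := ⟨k0⟩
  set P := ∑ k, p k with hPdef
  have hP : 0 < P := Finset.sum_pos (fun k _ => hp k) Finset.univ_nonempty
  set a := 1 + P / (N₀ * W) with hadef
  have ha : 1 < a := by
    have : 0 < P / (N₀ * W) := by positivity
    simp only [hadef]; linarith
  have hne : 1 + p k0 / (N₀ * w k0) ≠ a := by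
    intro h
    rw [hadef] at h
    have h' : p k0 / (N₀ * w k0) = P / (N₀ * W) := by linarith
    rcases eq_or_lt_of_le (hw k0) with hz | hz
    · rw [← hz] at h'
      have hpos : 0 < P / (N₀ * W) := by positivity
      simp at h'
      linarith [h'.symm ▸ hpos]
    · apply hk0
      rw [div_eq_div_iff (by positivity) (by positivity)] at h'
      rw [eq_div_iff hP.ne']
      have hmm : N₀ * (w k0 * P) = N₀ * (W * p k0) := by linear_combination -h'
      exact mul_left_cancel₀ hN.ne' hmm
  calc ∑ k, w k * Real.log (1 + p k / (N₀ * w k))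
      < ∑ k, (w k * Real.log a + (w k + p k / N₀ - a * w k) / a) :=
        Finset.sum_lt_sum (fun k _ => fdma_term_le (hp k) hN ha (hw k))
          ⟨k0, Finset.mem_univ k0, fdma_term_lt (hp k0) hN ha (hw k0) hne⟩
    _ = W * Real.log a := by
        rw [Finset.sum_add_distrib, ← Finset.sum_mul, hsum, ← Finset.sum_div]
        have h1 : ∑ k, (w k + p k / N₀ - a * w k) = W + P / N₀ - a * W := by
          rw [Finset.sum_sub_distrib, Finset.sum_add_distrib, hsum, ← Finset.sum_div,
            ← Finset.mul_sum, hsum]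
        have h2 : a * W = W + P / N₀ := by
          rw [hadef]; field_simp
        rw [h1, h2]
        simp

/-- For the unrestricted FDMA sum-rate problem, the proportional-share allocation
`w_k = w_tot · p_k / ∑ p` is the unique maximizer, and the maximum value equals
`w_tot·log₂(1 + (∑ p)/(N₀·w_tot))`. -/
theorem stmt_1 (K : ℕ) (hK : 0 < K) (p : Fin K → ℝ) (hp : ∀ k, 0 < p k)
    (wtot N₀ : ℝ) (hw : 0 < wtot) (hN : 0 < N₀) :
    let F : (Fin K → ℝ) → ℝ := fun w => ∑ k, w k * Real.logb 2 (1 + p k / (N₀ * w k))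
    let wstar : Fin K → ℝ := fun k => wtot * p k / (∑ k', p k')
    (∀ w : Fin K → ℝ, (∀ k, 0 ≤ w k) → (∑ k, w k) ≤ wtot → F w ≤ F wstar) ∧
    (∀ w : Fin K → ℝ, (∀ k, 0 ≤ w k) → (∑ k, w k) ≤ wtot → F w = F wstar → w = wstar) ∧
    F wstar = wtot * Real.logb 2 (1 + (∑ k, p k) / (N₀ * wtot)) := by

  intro F wstar
  haveI : Nonempty (Fin K) := ⟨⟨0, hK⟩⟩
  have hP : 0 < ∑ k, p k := Finset.sum_pos (fun k _ => hp k) Finset.univ_nonempty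
  set P := ∑ k, p k with hPdef
  have hlog2 : 0 < Real.log 2 := Real.log_pos one_lt_two
  -- F in terms of natural log
  have hGF : ∀ v : Fin K → ℝ,
      F v = (∑ k, v k * Real.log (1 + p k / (N₀ * v k))) / Real.log 2 := by
    intro v
    simp only [F, Real.logb, Finset.sum_div, mul_div_assoc]
  -- value of F at wstar
  have hratio : ∀ k, p k / (N₀ * wstar k) = P / (N₀ * wtot) := by
    intro k
    simp only [wstar]
    rw [div_eq_div_iff (mul_pos hN (div_pos (mul_pos hw (hp k)) hP)).ne' (by positivity)]
    field_simp
  have hsumstar : ∑ k, wstar k = wtot := by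
    simp only [wstar]
    rw [← Finset.sum_div, ← Finset.mul_sum, ← hPdef, mul_div_assoc, div_self hP.ne', mul_one]
  have hval : F wstar = wtot * Real.logb 2 (1 + P / (N₀ * wtot)) := by
    simp only [F]
    calc ∑ k, wstar k * Real.logb 2 (1 + p k / (N₀ * wstar k))
        = ∑ k, wstar k * Real.logb 2 (1 + P / (N₀ * wtot)) := by
          apply Finset.sum_congr rfl
          intro k _
          rw [hratio k]
      _ = wtot * Real.logb 2 (1 + P / (N₀ * wtot)) := by
          rw [← Finset.sum_mul, hsumstar]
  -- natural-log value at wstar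
  have hGval : (∑ k, wstar k * Real.log (1 + p k / (N₀ * wstar k))) =
      wtot * Real.log (1 + P / (N₀ * wtot)) := by
    have := hGF wstar
    rw [hval] at this
    have h2 : wtot * Real.logb 2 (1 + P / (N₀ * wtot)) =
        wtot * Real.log (1 + P / (N₀ * wtot)) / Real.log 2 := by
      rw [Real.logb]; ring
    rw [h2, div_eq_div_iff hlog2.ne' hlog2.ne'] at this
    exact (mul_right_cancel₀ hlog2.ne' this).symm
  -- strict upper bound whenever w ≠ wstar
  have hstrict : ∀ w : Fin K → ℝ, (∀ k, 0 ≤ w k) → (∑ k, w k) ≤ wtot →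
      w ≠ wstar → F w < F wstar := by
    intro w hw0 hle hne
    obtain ⟨k0, hk0⟩ := Function.ne_iff.1 hne
    have hsnn : 0 ≤ ∑ k, w k := Finset.sum_nonneg (fun k _ => hw0 k)
    have hdd : ∀ W : ℝ, P / (N₀ * W) = (P / N₀) / W := fun W => by rw [div_div]
    have hMpos : 0 < wtot * Real.log (1 + P / (N₀ * wtot)) := by
      apply mul_pos hw
      apply Real.log_pos
      have : 0 < P / (N₀ * wtot) := by positivity
      linarith
    have hGlt : (∑ k, w k * Real.log (1 + p k / (N₀ * w k))) <
        wtot * Real.log (1 + P / (N₀ * wtot)) := by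
      rcases eq_or_lt_of_le hsnn with hz | hz
      · have hzero : ∀ k ∈ Finset.univ, w k = 0 :=
          (Finset.sum_eq_zero_iff_of_nonneg (fun k _ => hw0 k)).1 hz.symm
        have : (∑ k, w k * Real.log (1 + p k / (N₀ * w k))) = 0 := by
          apply Finset.sum_eq_zero
          intro k hk
          rw [hzero k hk]; ring
        rw [this]; exact hMpos
      · rcases eq_or_lt_of_le hle with hEq | hLt
        · -- full bandwidth: use strict proportionality lemma
          have := fdma_G_lt p hp hN w hw0 hz rfl k0
            (by rw [hEq]; simpa [wstar, ← hPdef] using hk0)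
          rw [hEq] at this
          exact this
        · calc (∑ k, w k * Real.log (1 + p k / (N₀ * w k)))
              ≤ (∑ k, w k) * Real.log (1 + P / (N₀ * (∑ k, w k))) :=
                fdma_G_le hK p hp hN w hw0 hz rfl
            _ < wtot * Real.log (1 + P / (N₀ * wtot)) := by
                rw [hdd (∑ k, w k), hdd wtot]
                exact fdma_M_lt (by positivity) hsnn hLt
    rw [hGF w, hval]
    rw [Real.logb]
    rw [show wtot * (Real.log (1 + P / (N₀ * wtot)) / Real.log 2) =
        wtot * Real.log (1 + P / (N₀ * wtot)) / Real.log 2 by ring]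
    exact (div_lt_div_iff_of_pos_right hlog2).2 hGlt
  refine ⟨?_, ?_, ?_⟩
  · intro w hw0 hle
    by_cases hne : w = wstar
    · rw [hne]
    · exact (hstrict w hw0 hle hne).le
  · intro w hw0 hle heq
    by_contra hne
    exact absurd heq (ne_of_lt (hstrict w hw0 hle hne))
  · exact hval
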